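/- The limit of Ω(ε)/ε as ε → ∞ exists and equals √(2π)·Γ(3/4)/Γ(1/4), where Γ is the Euler Gamma function. -/

import Mathlib

open Real Set

/-- The modulus κ(ε) = ε/√(2(1+ε²)). -/
noncomputable def kappaMod (ε : ℝ) : ℝ := ε / Real.sqrt (2 * (1 + ε ^ 2))

/-- The complete elliptic integral of the first kind
K(κ) = ∫₀^{π/2} dθ/√(1 - κ² sin²θ). -/
noncomputable def ellipticK (κ : ℝ) : ℝ :=
  ∫ θ in (0:ℝ)..(π / 2), 1 / Real.sqrt (1 - κ ^ 2 * Real.sin θ ^ 2)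

/-- The frequency Ω(ε) = (π/2)·√(1+ε²)/K(κ(ε)) of the single-mode solution. -/
noncomputable def freqOmega (ε : ℝ) : ℝ :=
  (π / 2) * Real.sqrt (1 + ε ^ 2) / ellipticK (kappaMod ε)

/-! ### Auxiliary definitions and lemmas -/

open MeasureTheory

/-- The Beta-type integrand `t^(-3/4) (1-t)^(-1/2)`. -/
noncomputable def gbeta (t : ℝ) : ℝ := t ^ (-(3/4) : ℝ) * (1 - t) ^ (-(1/2) : ℝ)

/-- The Beta integral `B(1/4, 1/2)`. -/
noncomputable def betaI : ℝ := ∫ t in (0:ℝ)..1, gbeta t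

lemma beta_eq_complex : ∀ t ∈ uIcc (0:ℝ) 1,
    ((gbeta t : ℝ) : ℂ)
      = (t:ℂ) ^ ((1/4 : ℂ) - 1) * (1 - (t:ℂ)) ^ ((1/2 : ℂ) - 1) := by
  intro t ht
  rw [uIcc_of_le zero_le_one] at ht
  rw [gbeta]
  push_cast
  rw [Complex.ofReal_cpow ht.1, Complex.ofReal_cpow (by linarith [ht.2])]
  push_cast
  norm_num

lemma betaI_complex : (betaI : ℂ) = Complex.betaIntegral (1/4) (1/2) := by
  have h1 : Complex.betaIntegral (1/4) (1/2)
      = ∫ t in (0:ℝ)..1, ((gbeta t : ℝ) : ℂ) :=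
    (intervalIntegral.integral_congr beta_eq_complex).symm
  rw [h1, betaI]
  exact_mod_cast (RCLike.intervalIntegral_ofReal (𝕜 := ℂ)).symm

lemma betaI_eq : betaI = Real.Gamma (1/4) * Real.Gamma (1/2) / Real.Gamma (3/4) := by
  have h34 : (0:ℝ) < Real.Gamma (3/4) := Real.Gamma_pos_of_pos (by norm_num)
  have gm := Complex.Gamma_mul_Gamma_eq_betaIntegral
    (s := (1/4:ℂ)) (t := (1/2:ℂ)) (by norm_num) (by norm_num)
  rw [← betaI_complex, show (1/4 : ℂ) + 1/2 = ((3/4 : ℝ) : ℂ) by norm_num,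
    show (1/4 : ℂ) = ((1/4 : ℝ) : ℂ) by norm_num,
    show (1/2 : ℂ) = ((1/2 : ℝ) : ℂ) by norm_num,
    Complex.Gamma_ofReal, Complex.Gamma_ofReal, Complex.Gamma_ofReal] at gm
  have h : Real.Gamma (1/4) * Real.Gamma (1/2) = Real.Gamma (3/4) * betaI := by
    exact_mod_cast gm
  rw [h]
  field_simp

lemma gbeta_integrableOn : IntegrableOn gbeta (Icc (0:ℝ) 1) := by
  have hC : IntervalIntegrable
      (fun x : ℝ => (x:ℂ) ^ ((1/4:ℂ) - 1) * (1 - (x:ℂ)) ^ ((1/2:ℂ) - 1)) volume 0 1 :=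
    Complex.betaIntegral_convergent (by norm_num) (by norm_num)
  rw [intervalIntegrable_iff'] at hC
  rw [uIcc_of_le zero_le_one] at hC
  have h2 : IntegrableOn (fun t : ℝ => ((gbeta t : ℝ) : ℂ)) (Icc (0:ℝ) 1) := by
    refine hC.congr_fun ?_ measurableSet_Icc
    intro t ht
    exact (beta_eq_complex t (by rwa [uIcc_of_le zero_le_one])).symm
  have h3 : IntegrableOn (fun x => RCLike.re ((gbeta x : ℝ) : ℂ)) (Icc (0:ℝ) 1) := h2.re
  exact h3.congr_fun (fun t _ => by simp) measurableSet_Icc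

lemma key_eq : ∀ x ∈ Ioo (0:ℝ) (π/2),
    ((4:ℝ) * Real.cos x ^ 3 * (-Real.sin x)) * gbeta (Real.cos x ^ 4)
      = -(4 * (Real.sqrt (1 + Real.cos x ^ 2))⁻¹) := by
  intro x hx
  have hc : 0 < Real.cos x := Real.cos_pos_of_mem_Ioo ⟨by linarith [hx.1, pi_pos], hx.2⟩
  have hs : 0 < Real.sin x := Real.sin_pos_of_pos_of_lt_pi hx.1 (by linarith [hx.2, pi_pos])
  set c := Real.cos x
  set s := Real.sin x
  have hs2 : s ^ 2 = 1 - c ^ 2 := Real.sin_sq x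
  have h1 : 1 - c ^ 4 = s ^ 2 * (1 + c ^ 2) := by nlinarith [hs2]
  have e1 : (c ^ 4 : ℝ) ^ (-(3/4) : ℝ) = (c ^ 3)⁻¹ := by
    rw [← Real.rpow_natCast c 4, ← Real.rpow_mul hc.le,
      show ((4:ℕ):ℝ) * (-(3/4)) = ((-3:ℤ):ℝ) by push_cast; ring,
      Real.rpow_intCast, zpow_neg]
    norm_cast
  have e2 : (1 - c ^ 4 : ℝ) ^ (-(1/2) : ℝ) = (s * Real.sqrt (1 + c ^ 2))⁻¹ := by
    rw [h1, Real.rpow_neg (by positivity), ← Real.sqrt_eq_rpow,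
      Real.sqrt_mul (by positivity), Real.sqrt_sq hs.le]
  have hsq : (0:ℝ) < Real.sqrt (1 + c ^ 2) := Real.sqrt_pos.mpr (by positivity)
  rw [gbeta, e1, e2]
  field_simp

lemma gbeta_contOn : ContinuousOn gbeta (Ioo (0:ℝ) 1) := by
  intro t ht
  apply ContinuousWithinAt.mul
  · exact ((Real.continuousAt_rpow_const t _ (Or.inl ht.1.ne')).continuousWithinAt)
  · exact (((continuousAt_const.sub continuousAt_id).rpow_const
      (Or.inl (by exact sub_ne_zero.mpr (ne_of_gt ht.2)))).continuousWithinAt)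

lemma Jhalf : ∫ x in (0:ℝ)..(π/2), (Real.sqrt (1 + Real.cos x ^ 2))⁻¹
    = (∫ t in (0:ℝ)..1, gbeta t) / 4 := by
  have hpi : (0:ℝ) < π/2 := by positivity
  have hmin : min (0:ℝ) (π/2) = 0 := min_eq_left hpi.le
  have hmax : max (0:ℝ) (π/2) = π/2 := max_eq_right hpi.le
  have huIcc : Set.uIcc (0:ℝ) (π/2) = Icc (0:ℝ) (π/2) := uIcc_of_le hpi.le
  have himage : (fun x => Real.cos x ^ 4) '' Set.uIcc (0:ℝ) (π/2) ⊆ Icc (0:ℝ) 1 := by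
    rintro - ⟨x, -, rfl⟩
    have h2 : Real.cos x ^ 2 ≤ 1 := Real.cos_sq_le_one x
    have : Real.cos x ^ 4 ∈ Icc (0:ℝ) 1 := ⟨by positivity, by nlinarith⟩
    exact this
  have himage2 : (fun x => Real.cos x ^ 4) '' Ioo (0:ℝ) (π/2) ⊆ Ioo (0:ℝ) 1 := by
    rintro - ⟨x, hx, rfl⟩
    have hc : 0 < Real.cos x := Real.cos_pos_of_mem_Ioo ⟨by linarith [hx.1, pi_pos], hx.2⟩
    have hs : 0 < Real.sin x := Real.sin_pos_of_pos_of_lt_pi hx.1 (by linarith [hx.2, pi_pos])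
    have hc2 : Real.cos x ^ 2 < 1 := by nlinarith [Real.sin_sq x]
    have : Real.cos x ^ 4 ∈ Ioo (0:ℝ) 1 :=
      ⟨by positivity, by nlinarith [sq_nonneg (Real.cos x)]⟩
    exact this
  have hne : ∀ x : ℝ, Real.sqrt (1 + Real.cos x ^ 2) ≠ 0 := fun x =>
    (Real.sqrt_pos.mpr (by positivity)).ne'
  have hcont : Continuous fun x : ℝ => -(4 * (Real.sqrt (1 + Real.cos x ^ 2))⁻¹) := by
    have h1 : Continuous fun x : ℝ => Real.sqrt (1 + Real.cos x ^ 2) := by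
      exact Real.continuous_sqrt.comp (by continuity)
    exact (continuous_const.mul (h1.inv₀ hne)).neg
  have hsub0 := intervalIntegral.integral_comp_smul_deriv'''
    (a := (0:ℝ)) (b := π/2) (f := fun x => Real.cos x ^ 4)
    (f' := fun x => (4:ℝ) * Real.cos x ^ 3 * (-Real.sin x)) (g := gbeta)
    ((Real.continuous_cos.pow 4).continuousOn)
    (by
      intro x hx
      have h := ((Real.hasDerivAt_cos x).pow 4).hasDerivWithinAt (s := Ioi x)
      have e : ((4:ℕ):ℝ) * Real.cos x ^ (4-1) * (-Real.sin x)
          = (4:ℝ) * Real.cos x ^ 3 * (-Real.sin x) := by norm_num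
      rw [e] at h
      exact h)
    (by
      rw [hmin, hmax]
      exact gbeta_contOn.mono himage2)
    (gbeta_integrableOn.mono_set himage)
    (by
      rw [huIcc, IntegrableOn, ← restrict_Ioo_eq_restrict_Icc]
      exact ((hcont.integrableOn_Icc (a := 0) (b := π/2)).mono_set
        Ioo_subset_Icc_self).congr_fun (fun x hx => (key_eq x hx).symm) measurableSet_Ioo)
  have hsub : (∫ x in (0:ℝ)..(π/2), ((4:ℝ) * Real.cos x ^ 3 * (-Real.sin x)) * gbeta (Real.cos x ^ 4))
      = ∫ u in (1:ℝ)..0, gbeta u := by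
    have h1 : (fun x => Real.cos x ^ 4) 0 = (1:ℝ) := by norm_num
    have h2 : (fun x => Real.cos x ^ 4) (π/2) = (0:ℝ) := by simp
    rw [show Real.cos 0 ^ 4 = (1:ℝ) by simp, show Real.cos (π/2) ^ 4 = (0:ℝ) by simp] at hsub0
    simpa [Function.comp, smul_eq_mul] using hsub0
  have h2 : (∫ x in (0:ℝ)..(π/2), ((4:ℝ) * Real.cos x ^ 3 * (-Real.sin x)) * gbeta (Real.cos x ^ 4))
      = ∫ x in (0:ℝ)..(π/2), -(4 * (Real.sqrt (1 + Real.cos x ^ 2))⁻¹) := by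
    refine intervalIntegral.integral_congr_ae ?_
    rw [MeasureTheory.ae_iff]
    refine measure_mono_null ?_ (Real.volume_singleton (a := π/2))
    intro x hxbad
    simp only [mem_setOf_eq, _root_.not_imp] at hxbad
    obtain ⟨hxI, hne'⟩ := hxbad
    rw [Set.uIoc_of_le hpi.le] at hxI
    by_contra hx
    exact hne' (key_eq x ⟨hxI.1, lt_of_le_of_ne hxI.2 (by simpa using hx)⟩)
  rw [h2, intervalIntegral.integral_neg, intervalIntegral.integral_const_mul,
    intervalIntegral.integral_symm (0:ℝ) 1] at hsub
  linarith [hsub]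

lemma ellipticK_val : ellipticK (Real.sqrt (1/2)) = Real.sqrt 2 * betaI / 4 := by
  have hs : (Real.sqrt (1/2)) ^ 2 = 1/2 := Real.sq_sqrt (by norm_num)
  have h : ellipticK (Real.sqrt (1/2))
      = ∫ x in (0:ℝ)..(π/2), Real.sqrt 2 * (Real.sqrt (1 + Real.cos x ^ 2))⁻¹ := by
    rw [ellipticK]
    refine intervalIntegral.integral_congr fun θ _ => ?_
    rw [hs]
    have hcs : Real.sin θ ^ 2 = 1 - Real.cos θ ^ 2 := Real.sin_sq θ
    have h1 : 1 - 1/2 * Real.sin θ ^ 2 = (1 + Real.cos θ ^ 2)/2 := by rw [hcs]; ring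
    rw [h1, Real.sqrt_div (by positivity : (0:ℝ) ≤ 1 + Real.cos θ ^ 2), one_div, inv_div,
      div_eq_mul_inv]
  rw [h, intervalIntegral.integral_const_mul, Jhalf, betaI]
  ring

/-- Auxiliary regularised integrand for continuity of `ellipticK`. -/
noncomputable def Kmod (κ : ℝ) : ℝ :=
  ∫ θ in (0:ℝ)..(π / 2), 1 / Real.sqrt (max (1 - κ ^ 2 * Real.sin θ ^ 2) 4⁻¹)

lemma Kmod_cont : Continuous Kmod := by
  apply intervalIntegral.continuous_parametric_intervalIntegral_of_continuous'
  have hpos : ∀ p : ℝ × ℝ, (0:ℝ) < max (1 - p.1 ^ 2 * Real.sin p.2 ^ 2) 4⁻¹ :=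
    fun p => lt_of_lt_of_le (by norm_num) (le_max_right _ _)
  have hc : Continuous fun p : ℝ × ℝ => 1 - p.1 ^ 2 * Real.sin p.2 ^ 2 := by
    have : Continuous fun p : ℝ × ℝ => Real.sin p.2 := Real.continuous_sin.comp continuous_snd
    continuity
  exact continuous_const.div (Real.continuous_sqrt.comp (hc.max continuous_const))
    fun p => (Real.sqrt_pos.mpr (hpos p)).ne'

lemma ellipticK_contAt : ContinuousAt ellipticK (Real.sqrt (1/2)) := by
  have hopen : IsOpen {κ : ℝ | κ ^ 2 < 0.6} := isOpen_lt (by continuity) continuous_const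
  have hmem : Real.sqrt (1/2) ∈ {κ : ℝ | κ ^ 2 < 0.6} := by
    simp only [mem_setOf_eq, Real.sq_sqrt (by norm_num : (0:ℝ) ≤ 1/2)]
    norm_num
  refine Kmod_cont.continuousAt.congr ?_
  refine Filter.eventuallyEq_of_mem (hopen.mem_nhds hmem) ?_
  intro κ hκ
  refine intervalIntegral.integral_congr fun θ _ => ?_
  have hk : κ ^ 2 < 0.6 := hκ
  have h1 : κ ^ 2 * Real.sin θ ^ 2 ≤ 0.6 := by
    have hsin := Real.sin_sq_le_one θ
    have h2 : (0:ℝ) ≤ κ ^ 2 := sq_nonneg κ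
    nlinarith
  rw [max_eq_left (by norm_num; linarith)]

lemma kappa_tendsto : Filter.Tendsto kappaMod Filter.atTop (nhds (Real.sqrt (1/2))) := by
  have h1 : Filter.Tendsto (fun ε : ℝ => ε ^ 2 / (2 * (1 + ε ^ 2)))
      Filter.atTop (nhds (1/2)) := by
    have hid : ∀ ε : ℝ, 1/2 - (2 * (1 + ε ^ 2))⁻¹ = ε ^ 2 / (2 * (1 + ε ^ 2)) := by
      intro ε
      have : (0:ℝ) < 2 * (1 + ε ^ 2) := by positivity
      field_simp
      ring
    have h2 : Filter.Tendsto (fun ε : ℝ => 2 * (1 + ε ^ 2)) Filter.atTop Filter.atTop := by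
      apply Filter.Tendsto.const_mul_atTop two_pos
      exact Filter.tendsto_atTop_add_const_left _ 1 (Filter.tendsto_pow_atTop two_ne_zero)
    have h3 := h2.inv_tendsto_atTop
    have h4 : Filter.Tendsto (fun ε : ℝ => 1/2 - (2 * (1 + ε ^ 2))⁻¹)
        Filter.atTop (nhds (1/2 - 0)) := tendsto_const_nhds.sub h3
    rw [sub_zero] at h4
    exact h4.congr hid
  have h5 := (Real.continuous_sqrt.continuousAt (x := (1/2:ℝ))).tendsto.comp h1
  refine h5.congr' ?_
  filter_upwards [Filter.eventually_gt_atTop (0:ℝ)] with ε hε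
  simp only [Function.comp]
  rw [Real.sqrt_div (sq_nonneg ε), Real.sqrt_sq hε.le, kappaMod]

lemma sqrt_ratio_tendsto :
    Filter.Tendsto (fun ε : ℝ => Real.sqrt (1 + ε ^ 2) / ε) Filter.atTop (nhds 1) := by
  have h1 : Filter.Tendsto (fun ε : ℝ => (1 + ε ^ 2) / ε ^ 2) Filter.atTop (nhds 1) := by
    have h2 : Filter.Tendsto (fun ε : ℝ => (ε ^ 2)⁻¹ + 1) Filter.atTop (nhds (0 + 1)) :=
      (Filter.tendsto_pow_atTop two_ne_zero).inv_tendsto_atTop.add tendsto_const_nhds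
    rw [zero_add] at h2
    refine h2.congr' ?_
    filter_upwards [Filter.eventually_gt_atTop (0:ℝ)] with ε hε
    field_simp
  have h5 := (Real.continuous_sqrt.continuousAt (x := (1:ℝ))).tendsto.comp h1
  rw [show Real.sqrt 1 = 1 from Real.sqrt_one] at h5
  refine h5.congr' ?_
  filter_upwards [Filter.eventually_gt_atTop (0:ℝ)] with ε hε
  simp only [Function.comp]
  rw [Real.sqrt_div (by positivity), Real.sqrt_sq hε.le]

/-- Ω(ε)/ε → √(2π)·Γ(3/4)/Γ(1/4) as ε → ∞. -/
theorem freqOmega_large_amplitude :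
    Filter.Tendsto (fun ε : ℝ => freqOmega ε / ε) Filter.atTop
      (nhds (Real.sqrt (2 * π) * Real.Gamma (3 / 4) / Real.Gamma (1 / 4))) := by
  have hG14 : (0:ℝ) < Real.Gamma (1/4) := Real.Gamma_pos_of_pos (by norm_num)
  have hG34 : (0:ℝ) < Real.Gamma (3/4) := Real.Gamma_pos_of_pos (by norm_num)
  have hKval : ellipticK (Real.sqrt (1/2)) = Real.sqrt 2 * betaI / 4 := ellipticK_val
  have hKpos : 0 < ellipticK (Real.sqrt (1/2)) := by
    rw [hKval, betaI_eq, Real.Gamma_one_half_eq]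
    have h2 : (0:ℝ) < Real.sqrt 2 := Real.sqrt_pos.mpr (by norm_num)
    have hπ : (0:ℝ) < Real.sqrt π := Real.sqrt_pos.mpr pi_pos
    positivity
  have hK : Filter.Tendsto (fun ε => ellipticK (kappaMod ε)) Filter.atTop
      (nhds (ellipticK (Real.sqrt (1/2)))) := ellipticK_contAt.tendsto.comp kappa_tendsto
  have hmain : Filter.Tendsto
      (fun ε : ℝ => (π/2) * (Real.sqrt (1 + ε ^ 2) / ε) * (ellipticK (kappaMod ε))⁻¹)
      Filter.atTop (nhds ((π/2) * 1 * (ellipticK (Real.sqrt (1/2)))⁻¹)) :=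
    (tendsto_const_nhds.mul sqrt_ratio_tendsto).mul (hK.inv₀ hKpos.ne')
  have heq : ∀ ε : ℝ, (π/2) * (Real.sqrt (1 + ε ^ 2) / ε) * (ellipticK (kappaMod ε))⁻¹
      = freqOmega ε / ε := by
    intro ε
    rw [freqOmega]
    ring
  have hval : (π/2) * 1 * (ellipticK (Real.sqrt (1/2)))⁻¹
      = Real.sqrt (2 * π) * Real.Gamma (3/4) / Real.Gamma (1/4) := by
    rw [hKval, betaI_eq, Real.Gamma_one_half_eq,
      Real.sqrt_mul (by norm_num : (0:ℝ) ≤ 2) π]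
    have hππ : Real.sqrt π * Real.sqrt π = π := Real.mul_self_sqrt pi_pos.le
    have h22 : Real.sqrt 2 * Real.sqrt 2 = 2 := Real.mul_self_sqrt (by norm_num)
    have hπ : (0:ℝ) < Real.sqrt π := Real.sqrt_pos.mpr pi_pos
    have h2 : (0:ℝ) < Real.sqrt 2 := Real.sqrt_pos.mpr (by norm_num)
    field_simp
    ring_nf
    rw [sq, h22, sq, hππ]
    ring
  have := hmain.congr heq
  rwa [hval] at this
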